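/- Let r_1, ..., r_n be real numbers linearly independent over the rationals, and define P_0 = {1}, P_j = P_{j-1} ∪ (r_j + P_{j-1}). Then every subset Q ⊆ P_n with |Q| = k satisfies |Q − Q| ≥ k^{log_2 3}. -/

import Mathlib

open Real Pointwise

noncomputable def sc : ℝ := Real.logb 4 3

lemma sc_pos : 0 < sc := Real.logb_pos (by norm_num) (by norm_num)

lemma sc_lt_one : sc < 1 := by
  have h : Real.logb 4 3 < Real.logb 4 4 :=
    Real.logb_lt_logb (by norm_num) (by norm_num) (by norm_num)
  simpa [sc, Real.logb_self_eq_one] using h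

lemma sc_gt : 3/4 < sc := by
  have h4 : (0:ℝ) < Real.log 4 := Real.log_pos (by norm_num)
  have h : Real.log (64:ℝ) < Real.log 81 := Real.log_lt_log (by norm_num) (by norm_num)
  have h64 : Real.log (64:ℝ) = 3 * Real.log 4 := by
    rw [show (64:ℝ) = 4^(3:ℕ) by norm_num, Real.log_pow]; push_cast; ring
  have h81 : Real.log (81:ℝ) = 4 * Real.log 3 := by
    rw [show (81:ℝ) = 3^(4:ℕ) by norm_num, Real.log_pow]; push_cast; ring
  rw [sc, Real.logb, lt_div_iff₀ h4]
  nlinarith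

lemma two_sc : 2 * sc = Real.logb 2 3 := by
  have h2 : Real.log 2 ≠ 0 := ne_of_gt (Real.log_pos (by norm_num))
  have h4 : Real.log (4:ℝ) = 2 * Real.log 2 := by
    rw [show (4:ℝ) = 2^(2:ℕ) by norm_num, Real.log_pow]; push_cast; ring
  rw [sc, Real.logb, Real.logb, h4]
  field_simp

lemma rpow_two_sc : (2:ℝ) ^ (2*sc) = 3 := by
  rw [two_sc]; exact Real.rpow_logb (by norm_num) (by norm_num) (by norm_num)

lemma log3_eq : Real.log 3 = (2*sc) * Real.log 2 := by
  conv_lhs => rw [← rpow_two_sc]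
  rw [Real.log_rpow (by norm_num)]

lemma rpow_subadd {a b : ℝ} (ha : 0 ≤ a) (hb : 0 ≤ b) :
    (a + b) ^ sc ≤ a ^ sc + b ^ sc := by
  have h := NNReal.rpow_add_le_add_rpow (a.toNNReal) (b.toNNReal) sc_pos.le sc_lt_one.le
  have h2 := NNReal.coe_le_coe.2 h
  push_cast [← Real.toNNReal_add ha hb] at h2
  rwa [Real.coe_toNNReal _ (by positivity), Real.coe_toNNReal _ ha, Real.coe_toNNReal _ hb] at h2

noncomputable def phiF (t : ℝ) : ℝ := (sc-1) - sc*t + (4*sc-2) * t^sc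
noncomputable def Lf (t : ℝ) : ℝ :=
  (sc-1) * Real.log t + Real.log (1 + 2*t^sc) - (2*sc-1) * Real.log (1+t)
noncomputable def Gf (t : ℝ) : ℝ := 1 + t ^ sc + t ^ (2*sc) - (1+t) ^ (2*sc)

lemma one_add_two_rpow_pos {t : ℝ} (ht : 0 ≤ t) : (0:ℝ) < 1 + 2*t^sc := by
  have : (0:ℝ) ≤ t ^ sc := Real.rpow_nonneg ht _
  linarith

lemma phiF_cont : Continuous phiF := by
  unfold phiF
  exact ((continuous_const.sub (continuous_const.mul continuous_id)).add
    (continuous_const.mul (Real.continuous_rpow_const sc_pos.le)))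

lemma phiF_hasDeriv {t : ℝ} (ht : t ≠ 0) :
    HasDerivAt phiF (-sc + (4*sc-2)*(sc * t^(sc-1))) t := by
  have h1 : HasDerivAt (fun t : ℝ => (sc-1) - sc*t) (-sc) t := by
    simpa [Pi.sub_def] using (hasDerivAt_const t (sc-1)).sub ((hasDerivAt_id t).const_mul sc)
  have h2 : HasDerivAt (fun t : ℝ => (4*sc-2) * t^sc) ((4*sc-2)*(sc * t^(sc-1))) t :=
    (Real.hasDerivAt_rpow_const (Or.inl ht)).const_mul _
  unfold phiF
  simpa [Pi.add_def] using h1.add h2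

lemma phiF_mono : StrictMonoOn phiF (Set.Icc (0:ℝ) 1) := by
  apply strictMonoOn_of_deriv_pos (convex_Icc 0 1) phiF_cont.continuousOn
  intro t ht
  rw [interior_Icc] at ht
  rw [(phiF_hasDeriv (ne_of_gt ht.1)).deriv]
  have h1 : (1:ℝ) ≤ t ^ (sc - 1) :=
    Real.one_le_rpow_of_pos_of_le_one_of_nonpos ht.1 ht.2.le (by linarith [sc_lt_one])
  have h2 : (0:ℝ) ≤ (4*sc-2)*sc := by nlinarith [sc_pos, sc_gt]
  nlinarith [mul_le_mul_of_nonneg_left h1 h2, sc_pos, sc_gt]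

lemma phiF_zero : phiF 0 = sc - 1 := by
  simp [phiF, Real.zero_rpow (ne_of_gt sc_pos)]

lemma phiF_one : phiF 1 = 4*sc - 3 := by
  simp [phiF]; ring

lemma Lf_hasDeriv {t : ℝ} (ht : 0 < t) :
    HasDerivAt Lf ((sc-1) * t⁻¹ + (2*((sc * t^(sc-1)))) / (1 + 2*t^sc)
      - (2*sc-1) * ((1:ℝ)/(1+t))) t := by
  have h1 : HasDerivAt (fun t : ℝ => (sc-1) * Real.log t) ((sc-1) * t⁻¹) t :=
    (Real.hasDerivAt_log (ne_of_gt ht)).const_mul _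
  have h2i : HasDerivAt (fun t : ℝ => 1 + 2*t^sc) (2*(sc * t^(sc-1))) t :=
    ((Real.hasDerivAt_rpow_const (Or.inl (ne_of_gt ht))).const_mul 2).const_add 1
  have h2 : HasDerivAt (fun t : ℝ => Real.log (1 + 2*t^sc))
      ((2*(sc * t^(sc-1))) / (1 + 2*t^sc)) t :=
    h2i.log (ne_of_gt (one_add_two_rpow_pos ht.le))
  have h3i : HasDerivAt (fun t : ℝ => 1 + t) 1 t := (hasDerivAt_id t).const_add 1
  have h3 : HasDerivAt (fun t : ℝ => (2*sc-1) * Real.log (1+t))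
      ((2*sc-1) * (1/(1+t))) t := by
    have := (h3i.log (by linarith : (1:ℝ)+t ≠ 0)).const_mul (2*sc-1)
    simpa using this
  unfold Lf
  simpa [Pi.add_def, Pi.sub_def] using (h1.add h2).sub h3

lemma dL_eq_phi {t : ℝ} (ht : 0 < t) :
    (sc-1) * t⁻¹ + (2*((sc * t^(sc-1)))) / (1 + 2*t^sc) - (2*sc-1) * ((1:ℝ)/(1+t))
      = phiF t / (t * (1+2*t^sc) * (1+t)) := by
  have hA : (0:ℝ) < 1 + 2*t^sc := one_add_two_rpow_pos ht.le
  have h1 : t ^ (sc - 1) = t ^ sc / t := by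
    rw [Real.rpow_sub ht, Real.rpow_one]
  rw [h1]; unfold phiF
  field_simp
  ring

lemma Gf_hasDeriv {t : ℝ} (ht : 0 < t) :
    HasDerivAt Gf (sc*t^(sc-1) + (2*sc)*t^(2*sc-1) - (2*sc)*(1+t)^(2*sc-1)) t := by
  have h1 : HasDerivAt (fun t : ℝ => t ^ sc) (sc * t^(sc-1)) t :=
    Real.hasDerivAt_rpow_const (Or.inl (ne_of_gt ht))
  have h2 : HasDerivAt (fun t : ℝ => t ^ (2*sc)) ((2*sc) * t^(2*sc-1)) t :=
    Real.hasDerivAt_rpow_const (Or.inl (ne_of_gt ht))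
  have h3i : HasDerivAt (fun t : ℝ => 1 + t) 1 t := (hasDerivAt_id t).const_add 1
  have h3 : HasDerivAt (fun t : ℝ => (1+t) ^ (2*sc)) ((2*sc) * (1+t)^(2*sc-1)) t := by
    simpa using h3i.rpow_const (Or.inl (by linarith : (1:ℝ)+t ≠ 0))
  unfold Gf
  simpa [Pi.add_def, Pi.sub_def] using (((hasDerivAt_const t (1:ℝ)).add h1).add h2).sub h3

lemma Lf_one : Lf 1 = Real.log 2 := by
  have : (1:ℝ) + 2*(1:ℝ)^sc = 3 := by rw [Real.one_rpow]; norm_num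
  rw [Lf, this, Real.log_one]
  have h12 : (1:ℝ) + 1 = 2 := by norm_num
  rw [h12, log3_eq]; ring

lemma Gf_zero : Gf 0 = 0 := by
  have h1 : (0:ℝ)^sc = 0 := Real.zero_rpow (ne_of_gt sc_pos)
  have h2 : (0:ℝ)^(2*sc) = 0 := Real.zero_rpow (ne_of_gt (by linarith [sc_pos]))
  simp [Gf, h1, h2]

lemma Gf_one : Gf 1 = 0 := by
  have h : ((1:ℝ)+1)^(2*sc) = 3 := by norm_num [rpow_two_sc]
  simp [Gf, h]; norm_num

lemma Gf_cont : Continuous Gf := by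
  unfold Gf
  have h1 : Continuous fun t : ℝ => t ^ sc := Real.continuous_rpow_const sc_pos.le
  have h2 : Continuous fun t : ℝ => t ^ (2*sc) := Real.continuous_rpow_const (by linarith [sc_pos])
  have h3 : Continuous fun t : ℝ => (1+t) ^ (2*sc) :=
    Continuous.rpow_const (continuous_const.add continuous_id) (fun x => Or.inr (by linarith [sc_pos]))
  exact ((continuous_const.add h1).add h2).sub h3

-- Lf monotone / antitone on subintervals of (0,1]
lemma Lf_anti {u v : ℝ} (hu : 0 < u) (huv : u ≤ v) (hv : v ≤ 1) (hphi : phiF v ≤ 0) :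
    Lf v ≤ Lf u := by
  have cont : ContinuousOn Lf (Set.Icc u v) := fun x hx =>
    (Lf_hasDeriv (lt_of_lt_of_le hu hx.1)).continuousAt.continuousWithinAt
  have diff : DifferentiableOn ℝ Lf (interior (Set.Icc u v)) := by
    rw [interior_Icc]; exact fun x hx =>
      (Lf_hasDeriv (lt_of_lt_of_le hu hx.1.le)).differentiableAt.differentiableWithinAt
  have key : AntitoneOn Lf (Set.Icc u v) := by
    apply antitoneOn_of_deriv_nonpos (convex_Icc u v) cont diff
    intro x hx
    rw [interior_Icc] at hx
    have hx0 : 0 < x := lt_trans hu hx.1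
    rw [(Lf_hasDeriv hx0).deriv, dL_eq_phi hx0]
    apply div_nonpos_of_nonpos_of_nonneg
    · have : phiF x ≤ phiF v := by
        rcases eq_or_lt_of_le hx.2.le with h|h
        · rw [h]
        · exact le_of_lt (phiF_mono ⟨hx0.le, by linarith⟩ ⟨by linarith [hu], hv⟩ h)
      linarith
    · have := one_add_two_rpow_pos hx0.le
      positivity
  exact key ⟨le_rfl, huv⟩ ⟨huv, le_rfl⟩ huv

lemma Lf_mono {u v : ℝ} (hu : 0 < u) (huv : u ≤ v) (hv : v ≤ 1) (hphi : 0 ≤ phiF u) :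
    Lf u ≤ Lf v := by
  have cont : ContinuousOn Lf (Set.Icc u v) := fun x hx =>
    (Lf_hasDeriv (lt_of_lt_of_le hu hx.1)).continuousAt.continuousWithinAt
  have diff : DifferentiableOn ℝ Lf (interior (Set.Icc u v)) := by
    rw [interior_Icc]; exact fun x hx =>
      (Lf_hasDeriv (lt_of_lt_of_le hu hx.1.le)).differentiableAt.differentiableWithinAt
  have key : MonotoneOn Lf (Set.Icc u v) := by
    apply monotoneOn_of_deriv_nonneg (convex_Icc u v) cont diff
    intro x hx
    rw [interior_Icc] at hx
    have hx0 : 0 < x := lt_trans hu hx.1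
    rw [(Lf_hasDeriv hx0).deriv, dL_eq_phi hx0]
    apply div_nonneg
    · have : phiF u ≤ phiF x :=
        le_of_lt (phiF_mono ⟨hu.le, by linarith⟩ ⟨hx0.le, by linarith [hx.2]⟩ hx.1)
      linarith
    · have := one_add_two_rpow_pos hx0.le
      positivity
  exact key ⟨le_rfl, huv⟩ ⟨huv, le_rfl⟩ huv

-- sign of G′ vs L
lemma dG_sign {t : ℝ} (ht : 0 < t) :
    sc*t^(sc-1) + (2*sc)*t^(2*sc-1) - (2*sc)*(1+t)^(2*sc-1)
      = sc * (t^(sc-1)*(1+2*t^sc) - 2*(1+t)^(2*sc-1)) := by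
  have h : t^(2*sc-1) = t^(sc-1) * t^sc := by
    rw [← Real.rpow_add ht]; ring_nf
  rw [h]; ring

lemma N_pos {t : ℝ} (ht : 0 < t) : 0 < t^(sc-1)*(1+2*t^sc) :=
  mul_pos (Real.rpow_pos_of_pos ht _) (one_add_two_rpow_pos ht.le)

lemma D_pos {t : ℝ} (ht : 0 < t) : (0:ℝ) < 2*(1+t)^(2*sc-1) := by
  have : (0:ℝ) < (1+t)^(2*sc-1) := Real.rpow_pos_of_pos (by linarith) _
  linarith

lemma log_N {t : ℝ} (ht : 0 < t) :
    Real.log (t^(sc-1)*(1+2*t^sc)) = (sc-1) * Real.log t + Real.log (1 + 2*t^sc) := by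
  rw [Real.log_mul (ne_of_gt (Real.rpow_pos_of_pos ht _)) (ne_of_gt (one_add_two_rpow_pos ht.le)),
    Real.log_rpow ht]

lemma log_D {t : ℝ} (ht : 0 < t) :
    Real.log (2*(1+t)^(2*sc-1)) = Real.log 2 + (2*sc-1) * Real.log (1+t) := by
  rw [Real.log_mul (by norm_num) (ne_of_gt (Real.rpow_pos_of_pos (by linarith) _)),
    Real.log_rpow (by linarith)]

lemma dG_nonneg {t : ℝ} (ht : 0 < t) (hL : Real.log 2 ≤ Lf t) :
    0 ≤ sc*t^(sc-1) + (2*sc)*t^(2*sc-1) - (2*sc)*(1+t)^(2*sc-1) := by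
  rw [dG_sign ht]
  have h : 2*(1+t)^(2*sc-1) ≤ t^(sc-1)*(1+2*t^sc) := by
    rw [← Real.log_le_log_iff (D_pos ht) (N_pos ht), log_N ht, log_D ht]
    unfold Lf at hL; linarith
  nlinarith [sc_pos]

lemma dG_nonpos {t : ℝ} (ht : 0 < t) (hL : Lf t ≤ Real.log 2) :
    sc*t^(sc-1) + (2*sc)*t^(2*sc-1) - (2*sc)*(1+t)^(2*sc-1) ≤ 0 := by
  rw [dG_sign ht]
  have h : t^(sc-1)*(1+2*t^sc) ≤ 2*(1+t)^(2*sc-1) := by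
    rw [← Real.log_le_log_iff (N_pos ht) (D_pos ht), log_N ht, log_D ht]
    unfold Lf at hL; linarith
  nlinarith [sc_pos]

lemma Gf_ge_left {T : ℝ} (hT0 : 0 < T)
    (h : ∀ y, 0 < y → y ≤ T → Real.log 2 ≤ Lf y) : 0 ≤ Gf T := by
  have mono : MonotoneOn Gf (Set.Icc 0 T) := by
    apply monotoneOn_of_deriv_nonneg (convex_Icc _ _) Gf_cont.continuousOn
    · rw [interior_Icc]
      exact fun x hx => (Gf_hasDeriv hx.1).differentiableAt.differentiableWithinAt
    · intro x hx
      rw [interior_Icc] at hx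
      rw [(Gf_hasDeriv hx.1).deriv]
      exact dG_nonneg hx.1 (h x hx.1 hx.2.le)
  have := mono ⟨le_rfl, hT0.le⟩ ⟨hT0.le, le_rfl⟩ hT0.le
  rwa [Gf_zero] at this

lemma Gf_ge_right {T : ℝ} (hT0 : 0 < T) (hT1 : T ≤ 1)
    (h : ∀ y, T ≤ y → y ≤ 1 → Lf y ≤ Real.log 2) : 0 ≤ Gf T := by
  have anti : AntitoneOn Gf (Set.Icc T 1) := by
    apply antitoneOn_of_deriv_nonpos (convex_Icc _ _) Gf_cont.continuousOn
    · rw [interior_Icc]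
      exact fun x hx => (Gf_hasDeriv (lt_trans hT0 hx.1)).differentiableAt.differentiableWithinAt
    · intro x hx
      rw [interior_Icc] at hx
      rw [(Gf_hasDeriv (lt_trans hT0 hx.1)).deriv]
      exact dG_nonpos (lt_trans hT0 hx.1) (h x hx.1.le hx.2.le)
  have := anti ⟨le_rfl, hT1⟩ ⟨hT1, le_rfl⟩ hT1
  rwa [Gf_one] at this

lemma Gf_nonneg01 {t : ℝ} (ht0 : 0 ≤ t) (ht1 : t ≤ 1) : 0 ≤ Gf t := by
  rcases eq_or_lt_of_le ht0 with h|h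
  · rw [← h, Gf_zero]
  obtain ⟨a, ha, hphia⟩ : ∃ a ∈ Set.Icc (0:ℝ) 1, phiF a = 0 := by
    have key := intermediate_value_Icc (by norm_num : (0:ℝ) ≤ 1) phiF_cont.continuousOn
    have hmem : (0:ℝ) ∈ Set.Icc (phiF 0) (phiF 1) := by
      rw [phiF_zero, phiF_one]
      constructor <;> linarith [sc_lt_one, sc_gt]
    obtain ⟨a, ha, hphia⟩ := key hmem
    exact ⟨a, ha, hphia⟩
  have ha0 : 0 < a := by
    rcases eq_or_lt_of_le ha.1 with h0|h0
    · exfalso; rw [← h0] at hphia; rw [phiF_zero] at hphia; linarith [sc_lt_one]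
    · exact h0
  rcases le_or_gt t a with hta|hta
  · rcases le_or_gt (Real.log 2) (Lf t) with hLt|hLt
    · apply Gf_ge_left h
      intro y hy0 hyt
      calc Real.log 2 ≤ Lf t := hLt
        _ ≤ Lf y := by
            rcases eq_or_lt_of_le hyt with he|_
            · rw [he]
            · exact Lf_anti hy0 hyt ht1 (by
                rcases eq_or_lt_of_le hta with he|he
                · rw [he, hphia]
                · exact le_of_lt (by rw [← hphia]; exact phiF_mono ⟨ht0, ht1⟩ ha he))
    · apply Gf_ge_right h ht1
      intro y hty hy1
      rcases le_or_gt y a with hya|hya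
      · calc Lf y ≤ Lf t := by
              rcases eq_or_lt_of_le hty with he|_
              · rw [he]
              · exact Lf_anti h hty hy1 (by
                  rcases eq_or_lt_of_le hya with he|he
                  · rw [he, hphia]
                  · exact le_of_lt (by rw [← hphia]; exact phiF_mono ⟨by linarith [h, hty], hy1⟩ ha he))
          _ ≤ Real.log 2 := hLt.le
      · calc Lf y ≤ Lf 1 := Lf_mono (lt_trans ha0 hya) hy1 le_rfl
              (by rw [← hphia]; exact le_of_lt (phiF_mono ha ⟨by linarith [ha0, hya], hy1⟩ hya))
          _ = Real.log 2 := Lf_one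
  · apply Gf_ge_right h ht1
    intro y hty hy1
    calc Lf y ≤ Lf 1 := Lf_mono (by linarith) hy1 le_rfl
            (by rw [← hphia]; exact le_of_lt (phiF_mono ha ⟨by linarith, hy1⟩ (by linarith)))
      _ = Real.log 2 := Lf_one

lemma Gf_recip {t : ℝ} (ht : 0 < t) : Gf t = t^(2*sc) * Gf (1/t) := by
  have h1 : (1/t) ^ sc = 1 / t^sc := by
    rw [Real.div_rpow (by norm_num) ht.le, Real.one_rpow]
  have h2 : (1/t) ^ (2*sc) = 1 / t^(2*sc) := by
    rw [Real.div_rpow (by norm_num) ht.le, Real.one_rpow]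
  have h3 : ((1:ℝ)+1/t) ^ (2*sc) = (1+t)^(2*sc) / t^(2*sc) := by
    rw [show (1:ℝ)+1/t = (1+t)/t by field_simp; ring,
      Real.div_rpow (by linarith) ht.le]
  have hts : (0:ℝ) < t^sc := Real.rpow_pos_of_pos ht _
  have ht2s : (0:ℝ) < t^(2*sc) := Real.rpow_pos_of_pos ht _
  have hsplit : t^(2*sc) = t^sc * t^sc := by
    rw [← Real.rpow_add ht]; ring_nf
  have expand : t^(2*sc) * (1 + 1/t^sc + 1/t^(2*sc) - (1+t)^(2*sc)/t^(2*sc))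
      = t^(2*sc) + t^sc + 1 - (1+t)^(2*sc) := by
    rw [hsplit]; field_simp
  unfold Gf
  rw [h1, h2, h3, expand]
  ring

lemma Gf_nonneg {t : ℝ} (ht : 0 ≤ t) : 0 ≤ Gf t := by
  rcases le_or_gt t 1 with h|h
  · exact Gf_nonneg01 ht h
  · have ht0 : (0:ℝ) < t := by linarith
    rw [Gf_recip ht0]
    have : 0 ≤ Gf (1/t) := Gf_nonneg01 (by positivity) (by
      rw [div_le_one ht0]; linarith)
    positivity

noncomputable def Ff (x y : ℝ) : ℝ := 1 + x^sc + y^sc - (1+x)^sc*(1+y)^sc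

lemma Ff_cont (x : ℝ) : Continuous (Ff x) := by
  unfold Ff
  have h1 : Continuous fun y : ℝ => y ^ sc := Real.continuous_rpow_const sc_pos.le
  have h2 : Continuous fun y : ℝ => (1+y) ^ sc :=
    Continuous.rpow_const (continuous_const.add continuous_id) (fun _ => Or.inr sc_pos.le)
  exact ((continuous_const.add h1).sub (continuous_const.mul h2))

lemma Ff_hasDeriv (x : ℝ) {y : ℝ} (hy : 0 < y) :
    HasDerivAt (Ff x) (sc*y^(sc-1) - (1+x)^sc*(sc*(1+y)^(sc-1))) y := by
  have h1 : HasDerivAt (fun y : ℝ => y ^ sc) (sc * y^(sc-1)) y :=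
    Real.hasDerivAt_rpow_const (Or.inl (ne_of_gt hy))
  have h3i : HasDerivAt (fun y : ℝ => 1 + y) 1 y := (hasDerivAt_id y).const_add 1
  have h2 : HasDerivAt (fun y : ℝ => (1+x)^sc * (1+y) ^ sc) ((1+x)^sc*(sc*(1+y)^(sc-1))) y := by
    have := (h3i.rpow_const (p := sc) (Or.inl (by linarith : (1:ℝ)+y ≠ 0))).const_mul ((1+x)^sc)
    simpa [mul_assoc] using this
  unfold Ff
  simpa [Pi.add_def, Pi.sub_def] using ((hasDerivAt_const y (1 + x^sc)).add h1).sub h2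
  
-- condition
def Cd (x y : ℝ) : Prop := sc*Real.log (1+x) ≤ (1-sc)*(Real.log (1+y) - Real.log y)

lemma Cd_down {x y z : ℝ} (hz : 0 < z) (hzy : z ≤ y) (h : Cd x y) : Cd x z := by
  unfold Cd at *
  have hy : 0 < y := lt_of_lt_of_le hz hzy
  have key : Real.log (1+y) - Real.log y ≤ Real.log (1+z) - Real.log z := by
    rw [← Real.log_div (by linarith) (ne_of_gt hy), ← Real.log_div (by linarith) (ne_of_gt hz)]
    apply Real.log_le_log (by positivity)
    rw [div_le_div_iff₀ hy hz]
    nlinarith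
  nlinarith [sc_lt_one]

lemma Ff_deriv_nonneg {x y : ℝ} (hx : 0 < x) (hy : 0 < y) (h : Cd x y) :
    0 ≤ sc*y^(sc-1) - (1+x)^sc*(sc*(1+y)^(sc-1)) := by
  have hN : (0:ℝ) < y^(sc-1) := Real.rpow_pos_of_pos hy _
  have hD : (0:ℝ) < (1+x)^sc*(1+y)^(sc-1) :=
    mul_pos (Real.rpow_pos_of_pos (by linarith) _) (Real.rpow_pos_of_pos (by linarith) _)
  have key : (1+x)^sc*(1+y)^(sc-1) ≤ y^(sc-1) := by
    rw [← Real.log_le_log_iff hD hN, Real.log_rpow hy,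
      Real.log_mul (ne_of_gt (Real.rpow_pos_of_pos (by linarith) _))
        (ne_of_gt (Real.rpow_pos_of_pos (by linarith) _)),
      Real.log_rpow (by linarith : (0:ℝ) < 1+x), Real.log_rpow (by linarith : (0:ℝ) < 1+y)]
    unfold Cd at h; nlinarith
  nlinarith [sc_pos]

lemma Ff_deriv_nonpos {x y : ℝ} (hx : 0 < x) (hy : 0 < y) (h : ¬ Cd x y) :
    sc*y^(sc-1) - (1+x)^sc*(sc*(1+y)^(sc-1)) ≤ 0 := by
  unfold Cd at h
  push_neg at h
  have hN : (0:ℝ) < y^(sc-1) := Real.rpow_pos_of_pos hy _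
  have hD : (0:ℝ) < (1+x)^sc*(1+y)^(sc-1) :=
    mul_pos (Real.rpow_pos_of_pos (by linarith) _) (Real.rpow_pos_of_pos (by linarith) _)
  have key : y^(sc-1) ≤ (1+x)^sc*(1+y)^(sc-1) := by
    rw [← Real.log_le_log_iff hN hD, Real.log_rpow hy,
      Real.log_mul (ne_of_gt (Real.rpow_pos_of_pos (by linarith) _))
        (ne_of_gt (Real.rpow_pos_of_pos (by linarith) _)),
      Real.log_rpow (by linarith : (0:ℝ) < 1+x), Real.log_rpow (by linarith : (0:ℝ) < 1+y)]
    nlinarith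
  nlinarith [sc_pos]

lemma Ff_zero_nonneg {x : ℝ} (hx : 0 ≤ x) : 0 ≤ Ff x 0 := by
  have h := rpow_subadd (by norm_num : (0:ℝ) ≤ 1) hx
  rw [Real.one_rpow] at h
  have h0 : (0:ℝ)^sc = 0 := Real.zero_rpow (ne_of_gt sc_pos)
  simp [Ff, h0, Real.one_rpow]
  linarith

lemma Ff_inv_nonneg {x : ℝ} (hx : 0 < x) : 0 ≤ Ff x (1/x) := by
  have hxs : (0:ℝ) < x^sc := Real.rpow_pos_of_pos hx _
  have h1 : (1/x) ^ sc = 1 / x^sc := by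
    rw [Real.div_rpow (by norm_num) hx.le, Real.one_rpow]
  have h2 : ((1:ℝ)+1/x) ^ sc = (1+x)^sc / x^sc := by
    rw [show (1:ℝ)+1/x = (1+x)/x by field_simp; ring, Real.div_rpow (by linarith) hx.le]
  have hsplit : x^(2*sc) = x^sc * x^sc := by rw [← Real.rpow_add hx]; ring_nf
  have hsplit2 : (1+x)^(2*sc) = (1+x)^sc * (1+x)^sc := by
    rw [← Real.rpow_add (by linarith : (0:ℝ) < 1+x)]; ring_nf
  have key : x^sc * Ff x (1/x) = Gf x := by
    unfold Ff Gf
    rw [h1, h2, hsplit, hsplit2]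
    field_simp
    ring
  have hG := Gf_nonneg hx.le
  nlinarith [key, hxs]

lemma CI {x y : ℝ} (hx : 0 ≤ x) (hy : 0 ≤ y) (hxy : x*y ≤ 1) :
    (1+x)^sc*(1+y)^sc ≤ 1 + x^sc + y^sc := by
  rcases eq_or_lt_of_le hx with h0|hx0
  · have h := rpow_subadd (by norm_num : (0:ℝ) ≤ 1) hy
    rw [Real.one_rpow] at h
    rw [← h0]
    have : (0:ℝ)^sc = 0 := Real.zero_rpow (ne_of_gt sc_pos)
    simp [this, Real.one_rpow]
    linarith
  rcases eq_or_lt_of_le hy with h0|hy0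
  · have h := rpow_subadd (by norm_num : (0:ℝ) ≤ 1) hx
    rw [Real.one_rpow] at h
    rw [← h0]
    have : (0:ℝ)^sc = 0 := Real.zero_rpow (ne_of_gt sc_pos)
    simp [this, Real.one_rpow]
    linarith
  -- now x, y > 0, y ≤ 1/x
  have hy1x : y ≤ 1/x := by rw [le_div_iff₀ hx0]; linarith [mul_comm x y]
  have goal : 0 ≤ Ff x y := by
    by_cases hC : Cd x y
    · -- F monotone on [0, y]
      have mono : MonotoneOn (Ff x) (Set.Icc 0 y) := by
        apply monotoneOn_of_deriv_nonneg (convex_Icc _ _) (Ff_cont x).continuousOn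
        · rw [interior_Icc]
          exact fun z hz => (Ff_hasDeriv x hz.1).differentiableAt.differentiableWithinAt
        · intro z hz
          rw [interior_Icc] at hz
          rw [(Ff_hasDeriv x hz.1).deriv]
          exact Ff_deriv_nonneg hx0 hz.1 (Cd_down hz.1 hz.2.le hC)
      have := mono ⟨le_rfl, hy0.le⟩ ⟨hy0.le, le_rfl⟩ hy0.le
      linarith [Ff_zero_nonneg hx0.le]
    · -- F antitone on [y, 1/x]
      have anti : AntitoneOn (Ff x) (Set.Icc y (1/x)) := by
        apply antitoneOn_of_deriv_nonpos (convex_Icc _ _) (Ff_cont x).continuousOn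
        · rw [interior_Icc]
          exact fun z hz => (Ff_hasDeriv x (lt_trans hy0 hz.1)).differentiableAt.differentiableWithinAt
        · intro z hz
          rw [interior_Icc] at hz
          rw [(Ff_hasDeriv x (lt_trans hy0 hz.1)).deriv]
          apply Ff_deriv_nonpos hx0 (lt_trans hy0 hz.1)
          intro hCz
          exact hC (Cd_down hy0 hz.1.le hCz)
      have := anti ⟨le_rfl, hy1x⟩ ⟨hy1x, le_rfl⟩ hy1x
      linarith [Ff_inv_nonneg hx0]
  unfold Ff at goal; linarith

lemma KI' {a b a' b' : ℝ} (ha : 0 ≤ a) (hb : 0 ≤ b) (ha' : 0 ≤ a') (hb' : 0 ≤ b')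
    (hle : b*b' ≤ a*a') :
    ((a+b)*(a'+b'))^sc ≤ (a*a')^sc + (a'*b)^sc + (a*b')^sc := by
  rcases eq_or_lt_of_le ha with h0|ha0
  · -- a = 0, so b*b' ≤ 0, so b*b' = 0
    have hbb : b*b' = 0 := le_antisymm (by rw [← h0] at hle; simpa using hle) (by positivity)
    rcases mul_eq_zero.1 hbb with hb0|hb0
    · rw [← h0, hb0]
      have : ((0:ℝ)+0)*(a'+b') = 0 := by ring
      rw [this, Real.zero_rpow (ne_of_gt sc_pos)]
      positivity
    · rw [← h0, hb0]
      rw [show ((0:ℝ)+b)*(a'+0) = a'*b by ring]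
      have t1 : (0:ℝ) ≤ ((0:ℝ)*a')^sc := Real.rpow_nonneg (by simp) _
      have t2 : (0:ℝ) ≤ ((0:ℝ)*(0:ℝ))^sc := Real.rpow_nonneg (by norm_num) _
      linarith
  rcases eq_or_lt_of_le ha' with h0|ha0'
  · have hbb : b*b' = 0 := le_antisymm (by rw [← h0] at hle; simpa using hle) (by positivity)
    rcases mul_eq_zero.1 hbb with hb0|hb0
    · rw [← h0, hb0]
      rw [show (a+0)*((0:ℝ)+b') = a*b' by ring]
      have t1 : (0:ℝ) ≤ (a*(0:ℝ))^sc := Real.rpow_nonneg (by simp) _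
      have t2 : (0:ℝ) ≤ ((0:ℝ)*(0:ℝ))^sc := Real.rpow_nonneg (by norm_num) _
      linarith
    · rw [← h0, hb0]
      have h1 : (a+b)*((0:ℝ)+0) = 0 := by ring
      rw [h1, Real.zero_rpow (ne_of_gt sc_pos)]
      positivity
  -- a, a' > 0
  have hx0 : 0 ≤ b/a := by positivity
  have hy0 : 0 ≤ b'/a' := by positivity
  have hxy : (b/a)*(b'/a') ≤ 1 := by
    rw [div_mul_div_comm, div_le_one (by positivity)]
    nlinarith
  have hCI := CI hx0 hy0 hxy
  have e1 : (a+b)*(a'+b') = (a*a') * ((1+b/a)*(1+b'/a')) := by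
    field_simp
  have e2 : a'*b = (a*a') * (b/a) := by field_simp
  have e3 : a*b' = (a*a') * (b'/a') := by field_simp
  have haa : (0:ℝ) ≤ a*a' := by positivity
  have hpos : (0:ℝ) ≤ (a*a')^sc := Real.rpow_nonneg haa _
  calc ((a+b)*(a'+b'))^sc
      = (a*a')^sc * ((1+b/a)^sc*(1+b'/a')^sc) := by
        rw [e1, Real.mul_rpow haa (by positivity : (0:ℝ) ≤ (1+b/a)*(1+b'/a')),
          Real.mul_rpow (by positivity : (0:ℝ) ≤ 1+b/a) (by positivity : (0:ℝ) ≤ 1+b'/a')]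
    _ ≤ (a*a')^sc * (1 + (b/a)^sc + (b'/a')^sc) := mul_le_mul_of_nonneg_left hCI hpos
    _ = (a*a')^sc + (a*a')^sc*(b/a)^sc + (a*a')^sc*(b'/a')^sc := by ring
    _ = (a*a')^sc + (a'*b)^sc + (a*b')^sc := by
        rw [e2, e3, Real.mul_rpow haa hx0, Real.mul_rpow haa hy0]

lemma KI {a b a' b' : ℝ} (ha : 0 ≤ a) (hb : 0 ≤ b) (ha' : 0 ≤ a') (hb' : 0 ≤ b') :
    ((a+b)*(a'+b'))^sc ≤ max ((a*a')^sc) ((b*b')^sc) + (a'*b)^sc + (a*b')^sc := by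
  rcases le_total (b*b') (a*a') with h|h
  · have := KI' ha hb ha' hb' h
    have hm : (a*a')^sc ≤ max ((a*a')^sc) ((b*b')^sc) := le_max_left _ _
    linarith
  · have := KI' hb ha hb' ha' h
    have e : (b+a)*(b'+a') = (a+b)*(a'+b') := by ring
    rw [e] at this
    have hm : (b*b')^sc ≤ max ((a*a')^sc) ((b*b')^sc) := le_max_right _ _
    have e2 : b'*a = a*b' := by ring
    have e3 : b*a' = a'*b := by ring
    rw [e2, e3] at this
    linarith

section Comb
variable {n : ℕ} {r : Fin n → ℝ}
  (hindep : ∀ x : Fin n → ℤ, (∑ i, (x i : ℝ) * r i) = 0 → x = 0)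
  {P : ℕ → Finset ℝ} (hP0 : P 0 = {1})
  (hPstep : ∀ j : Fin n, P (j.1 + 1) = P j.1 ∪ (P j.1).image (fun a => r j + a))

include hP0 hPstep in
lemma memP : ∀ m, m ≤ n → ∀ p ∈ P m, ∃ ε : Fin n → ℤ,
    (∀ i : Fin n, m ≤ (i:ℕ) → ε i = 0) ∧ p = 1 + ∑ i, (ε i : ℝ) * r i := by
  intro m
  induction m with
  | zero =>
    intro _ p hp
    rw [hP0, Finset.mem_singleton] at hp
    exact ⟨0, fun i _ => rfl, by simp [hp]⟩
  | succ m ih =>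
    intro hm1 p hp
    have hmlt : m < n := Nat.lt_of_succ_le hm1
    set j : Fin n := ⟨m, hmlt⟩ with hj
    rw [hPstep j, Finset.mem_union] at hp
    rcases hp with hp | hp
    · obtain ⟨ε, hsupp, heq⟩ := ih (le_of_lt hmlt) p hp
      exact ⟨ε, fun i hi => hsupp i (by omega), heq⟩
    · rw [Finset.mem_image] at hp
      obtain ⟨q, hq, hq2⟩ := hp
      obtain ⟨ε, hsupp, heq⟩ := ih (le_of_lt hmlt) q hq
      refine ⟨fun i => ε i + if i = j then 1 else 0, ?_, ?_⟩
      · intro i hi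
        have h1 : ε i = 0 := hsupp i (by omega)
        have h2 : i ≠ j := by
          intro h
          have : (i:ℕ) = m := by rw [h]
          omega
        simp [h1, h2]
      · have hsum : ∑ i, ((ε i + if i = j then 1 else 0 : ℤ) : ℝ) * r i
            = (∑ i, (ε i : ℝ) * r i) + r j := by
          push_cast
          have e : ∀ x : Fin n, ((ε x : ℝ) + if x = j then 1 else 0) * r x
              = (ε x : ℝ) * r x + (if x = j then r x else 0) := by
            intro x; split <;> ring
          rw [Finset.sum_congr rfl (fun x _ => e x), Finset.sum_add_distrib,
            Finset.sum_ite_eq']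
          simp
        rw [← hq2, heq, hsum]
        ring


include hP0 hPstep in
lemma repdiff {m : ℕ} (hm : m ≤ n) {p q : ℝ} (hp : p ∈ P m) (hq : q ∈ P m) :
    ∃ δ : Fin n → ℤ, (∀ i : Fin n, m ≤ (i:ℕ) → δ i = 0) ∧
      p - q = ∑ i, (δ i : ℝ) * r i := by
  obtain ⟨ε, hs, he⟩ := memP hP0 hPstep m hm p hp
  obtain ⟨ε', hs', he'⟩ := memP hP0 hPstep m hm q hq
  refine ⟨fun i => ε i - ε' i, fun i hi => by simp only []; rw [hs i hi, hs' i hi]; ring, ?_⟩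
  have e : ∀ i : Fin n, ((ε i : ℝ) - (ε' i : ℝ)) * r i
      = (ε i : ℝ) * r i - (ε' i : ℝ) * r i := fun i => by ring
  rw [he, he']
  push_cast
  rw [Finset.sum_congr rfl (fun i _ => e i), Finset.sum_sub_distrib]
  ring

include hindep in
lemma level_ne {j : Fin n} {c₁ c₂ : ℤ} (hne : c₁ ≠ c₂) {δ δ' : Fin n → ℤ}
    (h1 : δ j = 0) (h2 : δ' j = 0) :
    (c₁:ℝ) * r j + ∑ i, (δ i : ℝ) * r i
      ≠ (c₂:ℝ) * r j + ∑ i, (δ' i : ℝ) * r i := by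
  intro heq
  set x : Fin n → ℤ := fun i => (if i = j then c₁ - c₂ else 0) + (δ i - δ' i) with hx
  have hsum : ∑ i, (x i : ℝ) * r i = 0 := by
    have e : ∀ i : Fin n, (x i : ℝ) * r i
        = (if i = j then ((c₁:ℝ) - c₂) * r i else 0) + ((δ i : ℝ) * r i - (δ' i : ℝ) * r i) := by
      intro i
      rw [hx]
      push_cast
      split <;> ring
    rw [Finset.sum_congr rfl (fun i _ => e i), Finset.sum_add_distrib,
      Finset.sum_ite_eq', Finset.sum_sub_distrib]
    simp only [Finset.mem_univ, if_true]
    linarith [heq]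
  have := hindep x hsum
  have hxj : x j = c₁ - c₂ := by rw [hx]; simp [h1, h2]
  rw [this] at hxj
  simp at hxj
  omega

include hindep hP0 hPstep in
lemma key : ∀ m, m ≤ n → ∀ Q Q' : Finset ℝ, Q ⊆ P m → Q' ⊆ P m →
    ((Q.card : ℝ) * Q'.card) ^ sc ≤ ((Q - Q').card : ℝ) := by
  intro m
  induction m with
  | zero =>
    intro _ Q Q' hQ hQ'
    rw [hP0] at hQ hQ'
    rcases Finset.subset_singleton_iff.1 hQ with h|h
    · subst h
      simp only [Finset.card_empty, Nat.cast_zero, zero_mul]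
      rw [Real.zero_rpow (ne_of_gt sc_pos)]
      positivity
    rcases Finset.subset_singleton_iff.1 hQ' with h'|h'
    · subst h'
      simp only [Finset.card_empty, Nat.cast_zero, mul_zero]
      rw [Real.zero_rpow (ne_of_gt sc_pos)]
      positivity
    · subst h; subst h'
      rw [Finset.singleton_sub_singleton]
      simp
  | succ m ih =>
    intro hm1 Q Q' hQ hQ'
    classical
    have hmlt : m < n := Nat.lt_of_succ_le hm1
    have hm : m ≤ n := le_of_lt hmlt
    set j : Fin n := ⟨m, hmlt⟩ with hj
    have hstep : P (m+1) = P m ∪ (P m).image (fun a => r j + a) := hPstep j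
    have facts : ∀ R : Finset ℝ, R ⊆ P (m+1) →
        (R.filter (· ∈ P m)) ⊆ P m ∧
        ((R.filter (· ∉ P m)).image (fun a => a - r j)) ⊆ P m ∧
        (R.filter (· ∈ P m)).card + ((R.filter (· ∉ P m)).image (fun a => a - r j)).card = R.card ∧
        (∀ x ∈ (R.filter (· ∉ P m)).image (fun a => a - r j), r j + x ∈ R) := by
      intro R hR
      refine ⟨fun x hx => (Finset.mem_filter.1 hx).2, ?_, ?_, ?_⟩
      · intro x hx
        rw [Finset.mem_image] at hx
        obtain ⟨a, ha, rfl⟩ := hx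
        rw [Finset.mem_filter] at ha
        have haP := hR ha.1
        rw [hstep, Finset.mem_union] at haP
        rcases haP with h|h
        · exact absurd h ha.2
        · rw [Finset.mem_image] at h
          obtain ⟨p, hp, rfl⟩ := h
          simpa using hp
      · rw [Finset.card_image_of_injective _ sub_left_injective]
        exact Finset.card_filter_add_card_filter_not _
      · intro x hx
        rw [Finset.mem_image] at hx
        obtain ⟨a, ha, rfl⟩ := hx
        have e : r j + (a - r j) = a := by ring
        rw [e]
        exact (Finset.mem_filter.1 ha).1
    obtain ⟨hQ0P, hQ1P, hcard, hrec⟩ := facts Q hQ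
    obtain ⟨hQ0P', hQ1P', hcard', hrec'⟩ := facts Q' hQ'
    set Q0 := Q.filter (· ∈ P m) with hQ0d
    set Q1 := (Q.filter (· ∉ P m)).image (fun a => a - r j) with hQ1d
    set Q0' := Q'.filter (· ∈ P m) with hQ0d'
    set Q1' := (Q'.filter (· ∉ P m)).image (fun a => a - r j) with hQ1d'
    have hzdiff : ∀ (A B : Finset ℝ), A ⊆ P m → B ⊆ P m → ∀ z ∈ A - B,
        ∃ δ : Fin n → ℤ, δ j = 0 ∧ z = ∑ i, (δ i : ℝ) * r i := by
      intro A B hA hB z hz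
      rw [Finset.mem_sub] at hz
      obtain ⟨p, hp, q, hq, rfl⟩ := hz
      obtain ⟨δ, hs, he⟩ := repdiff hP0 hPstep hm (hA hp) (hB hq)
      exact ⟨δ, hs j le_rfl, he⟩
    set S0 := (Q0 - Q0') ∪ (Q1 - Q1') with hS0d
    set Sp := (Q1 - Q0').image (fun d => r j + d) with hSpd
    set Sm := (Q0 - Q1').image (fun d => d - r j) with hSmd
    have hS0D : S0 ⊆ Q - Q' := by
      apply Finset.union_subset
      · exact Finset.sub_subset_sub (Finset.filter_subset _ _) (Finset.filter_subset _ _)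
      · intro z hz
        rw [Finset.mem_sub] at hz
        obtain ⟨x, hx, y, hy, rfl⟩ := hz
        rw [Finset.mem_sub]
        exact ⟨r j + x, hrec x hx, r j + y, hrec' y hy, by ring⟩
    have hSpD : Sp ⊆ Q - Q' := by
      intro z hz
      rw [hSpd, Finset.mem_image] at hz
      obtain ⟨d, hd, rfl⟩ := hz
      rw [Finset.mem_sub] at hd ⊢
      obtain ⟨x, hx, y, hy, rfl⟩ := hd
      exact ⟨r j + x, hrec x hx, y, (Finset.mem_filter.1 hy).1, by ring⟩
    have hSmD : Sm ⊆ Q - Q' := by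
      intro z hz
      rw [hSmd, Finset.mem_image] at hz
      obtain ⟨d, hd, rfl⟩ := hz
      rw [Finset.mem_sub] at hd ⊢
      obtain ⟨x, hx, y, hy, rfl⟩ := hd
      exact ⟨x, (Finset.mem_filter.1 hx).1, r j + y, hrec' y hy, by ring⟩
    have hd1 : Disjoint S0 Sp := by
      rw [Finset.disjoint_left]
      intro z hz1 hz2
      have h0 : ∃ δ : Fin n → ℤ, δ j = 0 ∧ z = ∑ i, (δ i:ℝ) * r i := by
        rw [hS0d, Finset.mem_union] at hz1
        rcases hz1 with h|h
        · exact hzdiff _ _ hQ0P hQ0P' z h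
        · exact hzdiff _ _ hQ1P hQ1P' z h
      obtain ⟨δ, hδ, hzeq⟩ := h0
      rw [hSpd, Finset.mem_image] at hz2
      obtain ⟨d, hd, hdz⟩ := hz2
      obtain ⟨δ', hδ', hdeq⟩ := hzdiff _ _ hQ1P hQ0P' d hd
      exact level_ne hindep (show (0:ℤ) ≠ 1 by norm_num) hδ hδ'
        (by push_cast; linarith [hzeq, hdz, hdeq])
    have hd2 : Disjoint S0 Sm := by
      rw [Finset.disjoint_left]
      intro z hz1 hz2
      have h0 : ∃ δ : Fin n → ℤ, δ j = 0 ∧ z = ∑ i, (δ i:ℝ) * r i := by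
        rw [hS0d, Finset.mem_union] at hz1
        rcases hz1 with h|h
        · exact hzdiff _ _ hQ0P hQ0P' z h
        · exact hzdiff _ _ hQ1P hQ1P' z h
      obtain ⟨δ, hδ, hzeq⟩ := h0
      rw [hSmd, Finset.mem_image] at hz2
      obtain ⟨d, hd, hdz⟩ := hz2
      obtain ⟨δ', hδ', hdeq⟩ := hzdiff _ _ hQ0P hQ1P' d hd
      exact level_ne hindep (show (0:ℤ) ≠ -1 by norm_num) hδ hδ'
        (by push_cast; linarith [hzeq, hdz, hdeq])
    have hd3 : Disjoint Sp Sm := by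
      rw [Finset.disjoint_left]
      intro z hz1 hz2
      rw [hSpd, Finset.mem_image] at hz1
      obtain ⟨d, hd, hdz⟩ := hz1
      obtain ⟨δ, hδ, hdeq⟩ := hzdiff _ _ hQ1P hQ0P' d hd
      rw [hSmd, Finset.mem_image] at hz2
      obtain ⟨d', hd', hdz'⟩ := hz2
      obtain ⟨δ', hδ', hdeq'⟩ := hzdiff _ _ hQ0P hQ1P' d' hd'
      exact level_ne hindep (show (1:ℤ) ≠ -1 by norm_num) hδ hδ'
        (by push_cast; linarith [hdz, hdz', hdeq, hdeq'])
    have hcard_union : (S0 ∪ Sp ∪ Sm).card = S0.card + Sp.card + Sm.card := by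
      rw [Finset.card_union_of_disjoint (Finset.disjoint_union_left.2 ⟨hd2, hd3⟩),
        Finset.card_union_of_disjoint hd1]
    have hDge : (S0.card:ℝ) + Sp.card + Sm.card ≤ ((Q - Q').card : ℝ) := by
      have h := Finset.card_le_card (Finset.union_subset (Finset.union_subset hS0D hSpD) hSmD)
      rw [hcard_union] at h
      exact_mod_cast h
    have hSpcard : Sp.card = (Q1 - Q0').card :=
      Finset.card_image_of_injective _ (add_right_injective _)
    have hSmcard : Sm.card = (Q0 - Q1').card :=
      Finset.card_image_of_injective _ sub_left_injective
    have h00 : ((Q0 - Q0').card:ℝ) ≤ S0.card :=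
      Nat.cast_le.2 (Finset.card_le_card Finset.subset_union_left)
    have h11 : ((Q1 - Q1').card:ℝ) ≤ S0.card :=
      Nat.cast_le.2 (Finset.card_le_card Finset.subset_union_right)
    have ih00 := ih hm Q0 Q0' hQ0P hQ0P'
    have ih11 := ih hm Q1 Q1' hQ1P hQ1P'
    have ih10 := ih hm Q1 Q0' hQ1P hQ0P'
    have ih01 := ih hm Q0 Q1' hQ0P hQ1P'
    have hKI := KI (a := (Q0.card:ℝ)) (b := (Q1.card:ℝ)) (a' := (Q0'.card:ℝ))
      (b' := (Q1'.card:ℝ)) (Nat.cast_nonneg _) (Nat.cast_nonneg _) (Nat.cast_nonneg _) (Nat.cast_nonneg _)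
    have hQc : (Q.card : ℝ) = (Q0.card:ℝ) + Q1.card := by
      rw [← hcard]; push_cast; ring
    have hQc' : (Q'.card : ℝ) = (Q0'.card:ℝ) + Q1'.card := by
      rw [← hcard']; push_cast; ring
    rw [hQc, hQc']
    have hmax : max (((Q0.card:ℝ) * Q0'.card)^sc) (((Q1.card:ℝ) * Q1'.card)^sc)
        ≤ (S0.card:ℝ) := max_le (ih00.trans h00) (ih11.trans h11)
    have hterm2 : ((Q0'.card:ℝ) * Q1.card)^sc ≤ (Sp.card:ℝ) := by
      rw [mul_comm, hSpcard]; exact ih10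
    have hterm3 : ((Q0.card:ℝ) * Q1'.card)^sc ≤ (Sm.card:ℝ) := by
      rw [hSmcard]; exact ih01
    calc (((Q0.card:ℝ) + Q1.card) * ((Q0'.card:ℝ) + Q1'.card)) ^ sc
        ≤ max (((Q0.card:ℝ) * Q0'.card)^sc) (((Q1.card:ℝ) * Q1'.card)^sc)
          + ((Q0'.card:ℝ) * Q1.card)^sc + ((Q0.card:ℝ) * Q1'.card)^sc := hKI
      _ ≤ (S0.card:ℝ) + Sp.card + Sm.card := by
          apply add_le_add (add_le_add hmax hterm2) hterm3
      _ ≤ ((Q - Q').card : ℝ) := hDge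

end Comb

theorem stmt_10 (n : ℕ) (r : Fin n → ℝ)
    (hindep : ∀ x : Fin n → ℤ, (∑ i, (x i : ℝ) * r i) = 0 → x = 0)
    (P : ℕ → Finset ℝ) (hP0 : P 0 = {1})
    (hPstep : ∀ j : Fin n, P (j.1 + 1) = P j.1 ∪ (P j.1).image (fun a => r j + a))
    (k : ℕ) (Q : Finset ℝ) (hQ : Q ⊆ P n) (hk : Q.card = k) :
    ((Q - Q).card : ℝ) ≥ (k : ℝ) ^ Real.logb 2 3 := by
  classical
  have hkey := key hindep hP0 hPstep n le_rfl Q Q hQ hQ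
  rw [ge_iff_le]
  calc (k:ℝ) ^ Real.logb 2 3
      = ((Q.card:ℝ)) ^ (2*sc) := by rw [← hk, ← two_sc]
    _ = (((Q.card:ℝ)) ^ (2:ℝ)) ^ sc := by rw [← Real.rpow_mul (Nat.cast_nonneg _)]
    _ = ((Q.card:ℝ) * Q.card) ^ sc := by
        rw [show ((2:ℝ)) = ((2:ℕ):ℝ) by norm_num, Real.rpow_natCast, pow_two]
    _ ≤ ((Q - Q).card : ℝ) := hkey
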